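/- Let γ_m, γ₀ : ℝ/Lℤ → ℝⁿ (n ≥ 2) be C¹ closed curves with nowhere-vanishing derivative such that γ_m → γ₀ and γ_m' → γ₀' uniformly on ℝ/Lℤ, and set K_m = γ_m(ℝ/Lℤ), K₀ = γ₀(ℝ/Lℤ). If r > 0 and R_O(K_m) ≥ r for all sufficiently large m, then R_O(K₀) ≥ r. Consequently, limsup_m R_O(K_m) ≤ R_O(K₀). -/

import Mathlib

open Set Filter MeasureTheory
open scoped RealInnerProductSpace Topology ENNReal

noncomputable section

/-- Euclidean space `ℝⁿ`. -/
abbrev Euc (n : ℕ) := EuclideanSpace ℝ (Fin n)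

/-- Generalized curvature `κγ(s)` of a curve with derivative `γd` and parameter domain `D`:
the limsup, as `x, y → s` with `x ≠ y`, of `∠(γd x, γd y) / |x - y|`, expressed as the
infimum of all eventual bounds. -/
def curvAt {n : ℕ} (γd : ℝ → Euc n) (D : Set ℝ) (s : ℝ) : ℝ :=
  sInf {Λ : ℝ | 0 ≤ Λ ∧ ∃ δ > 0, ∀ x ∈ D, ∀ y ∈ D, x ≠ y →
    |x - s| < δ → |y - s| < δ →
    InnerProductGeometry.angle (γd x) (γd y) ≤ Λ * |x - y|}

/-- `κγ(s) < Λ`: there are `δ > 0` and `Λ' < Λ` bounding the angle dilation near `s`. -/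
def CurvLt {n : ℕ} (γd : ℝ → Euc n) (D : Set ℝ) (s Λ : ℝ) : Prop :=
  ∃ δ > 0, ∃ Λ' < Λ, ∀ x ∈ D, ∀ y ∈ D, x ≠ y → |x - s| < δ → |y - s| < δ →
    InnerProductGeometry.angle (γd x) (γd y) ≤ Λ' * |x - y|

/-- `f` restricted to `[a, c]` is a planar circular arc of radius `1/Λ`
of length in `[0, 2π/Λ)`. -/
def IsArc {n : ℕ} (Λ : ℝ) (f : ℝ → Euc n) (a c : ℝ) : Prop :=
  c - a < 2 * Real.pi / Λ ∧
  ∃ (o u e : Euc n) (s₁ : ℝ), ‖u‖ = 1 ∧ ‖e‖ = 1 ∧ ⟪u, e⟫ = 0 ∧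
    ∀ s ∈ Icc a c,
      f s = o + (Λ⁻¹ * Real.cos (Λ * (s - s₁))) • u + (Λ⁻¹ * Real.sin (Λ * (s - s₁))) • e

/-- `f` restricted to `[a, c]` is a planar circular arc of radius `r`. -/
def IsArcR {n : ℕ} (r : ℝ) (f : ℝ → Euc n) (a c : ℝ) : Prop :=
  ∃ (o u e : Euc n) (s₁ : ℝ), ‖u‖ = 1 ∧ ‖e‖ = 1 ∧ ⟪u, e⟫ = 0 ∧
    ∀ s ∈ Icc a c,
      f s = o + (r * Real.cos ((s - s₁) / r)) • u + (r * Real.sin ((s - s₁) / r)) • e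

/-- `O_p(v, r)`: the union of the open balls of radius `r` tangent to `v^⊥` at `p`. -/
def Odisk {n : ℕ} (p v : Euc n) (r : ℝ) : Set (Euc n) :=
  {x | ∃ w : Euc n, ‖w‖ = 1 ∧ ⟪w, v⟫ = 0 ∧ ‖x - p - r • w‖ < r}

/-- Ball radius `R_O` of the curve `f` (with derivative/tangent field `γd`) on domain `D`. -/
def RO {n : ℕ} (f γd : ℝ → Euc n) (D : Set ℝ) : ℝ :=
  sInf {r : ℝ | 0 < r ∧ ∃ s ∈ D, ∃ t ∈ D, ∃ w : Euc n,
    ‖w‖ = 1 ∧ ⟪w, γd s⟫ = 0 ∧ ‖f t - f s - r • w‖ < r}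

/-- Minimal double critical distance of the curve `f` with tangent field `γd`. -/
def MDC {n : ℕ} (f γd : ℝ → Euc n) : ℝ :=
  sInf {d : ℝ | ∃ x y : ℝ, f x ≠ f y ∧ ⟪f x - f y, γd x⟫ = 0 ∧
    ⟪f x - f y, γd y⟫ = 0 ∧ d = ‖f x - f y‖}

/-- Normal injectivity radius `i(K, ℝⁿ)` of the curve `f` with tangent field `γd`. -/
def injRad {n : ℕ} (f γd : ℝ → Euc n) : ℝ :=
  sSup ({0} ∪ {r : ℝ | 0 < r ∧ ∀ s t : ℝ, ∀ u w : Euc n,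
    ⟪u, γd s⟫ = 0 → ⟪w, γd t⟫ = 0 → ‖u‖ < r → ‖w‖ < r →
    f s + u = f t + w → f s = f t ∧ u = w})

/-- A knot: a simple closed unit-speed `C^{1,1}` curve, as an `L`-periodic map `ℝ → ℝⁿ`,
injective on `[0, L)`, with `‖γ'‖ ≡ 1` and `γ'` Lipschitz. -/
structure Knot (n : ℕ) where
  L : ℝ
  Lpos : 0 < L
  f : ℝ → Euc n
  fd : ℝ → Euc n
  per : ∀ s, f (s + L) = f s
  perd : ∀ s, fd (s + L) = fd s
  deriv : ∀ s, HasDerivAt f (fd s) s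
  unit : ∀ s, ‖fd s‖ = 1
  lipd : ∃ C : NNReal, LipschitzWith C fd
  inj : InjOn f (Ico 0 L)

/-- Ropelength `ℓ_e(γ) = L / R_O(K)`. -/
def Knot.ropelength {n : ℕ} (k : Knot n) : ℝ := k.L / RO k.f k.fd univ

/-- The set `I_c` of parameters realizing the minimal double critical distance. -/
def Knot.Ic {n : ℕ} (k : Knot n) : Set ℝ :=
  {x | ∃ y : ℝ, k.f x ≠ k.f y ∧ ⟪k.f x - k.f y, k.fd x⟫ = 0 ∧
    ⟪k.f x - k.f y, k.fd y⟫ = 0 ∧ ‖k.f x - k.f y‖ = MDC k.f k.fd}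

/-- `sup_s κγ(s)` for a knot. -/
def Knot.supCurv {n : ℕ} (k : Knot n) : ℝ := ⨆ s : ℝ, curvAt k.fd univ s

/-- Analytic focal distance `F_k(γ) = (sup_s κγ(s))⁻¹`. -/
def Knot.Fk {n : ℕ} (k : Knot n) : ℝ := (k.supCurv)⁻¹

/-- Two knots are in the same knot class: after rescaling their domains to `ℝ/ℤ`
(realized by `1`-periodic maps `ℝ → ℝⁿ`), they are joined by a continuous homotopy
through injective loops. -/
def SameKnotClass {n : ℕ} (k₁ k₂ : Knot n) : Prop :=
  ∃ H : ℝ → ℝ → Euc n,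
    ContinuousOn (fun z : ℝ × ℝ => H z.1 z.2) (Icc 0 1 ×ˢ univ) ∧
    (∀ t s, H t (s + 1) = H t s) ∧
    (∀ s, H 0 s = k₁.f (k₁.L * s)) ∧
    (∀ s, H 1 s = k₂.f (k₂.L * s)) ∧
    ∀ t ∈ Icc (0 : ℝ) 1, InjOn (H t) (Ico 0 1)

/-- A knot is relatively extremal: a relative minimum of ropelength within its knot class
with respect to the `C¹` topology (on rescaled parametrizations). -/
def RelativelyExtremal {n : ℕ} (k : Knot n) : Prop :=
  ∃ ε > 0, ∀ η : Knot n, SameKnotClass k η →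
    (∀ s : ℝ, ‖η.f (η.L * s) - k.f (k.L * s)‖ +
      ‖η.L • η.fd (η.L * s) - k.L • k.fd (k.L * s)‖ < ε) →
    k.ropelength ≤ η.ropelength

/-- The class `C(p, q; v, w; Λ)`: unit-speed `C^{1,1}` curves `γ : [0, L] → ℝⁿ`
(`L` not fixed) from `p` to `q` with initial/terminal directions `v, w`
and `Λ`-Lipschitz derivative (curvature at most `Λ`). -/
structure CurveCC (n : ℕ) (p q v w : Euc n) (Λ : ℝ) where
  L : ℝ
  Lnn : 0 ≤ L
  f : ℝ → Euc n
  fd : ℝ → Euc n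
  deriv : ∀ s ∈ Icc (0 : ℝ) L, HasDerivWithinAt f (fd s) (Icc 0 L) s
  unit : ∀ s ∈ Icc (0 : ℝ) L, ‖fd s‖ = 1
  lip : LipschitzOnWith Λ.toNNReal fd (Icc 0 L)
  i0 : f 0 = p
  id0 : fd 0 = v
  iL : f L = q
  idL : fd L = w

/-- A `C¹` closed curve of period `L` with nowhere-vanishing derivative. -/
structure ClosedC1 (n : ℕ) (L : ℝ) where
  f : ℝ → Euc n
  fd : ℝ → Euc n
  per : ∀ s, f (s + L) = f s
  perd : ∀ s, fd (s + L) = fd s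
  deriv : ∀ s, HasDerivAt f (fd s) s
  nz : ∀ s, fd s ≠ 0

/-- A simple closed `C^{1,1}` curve of period `L` with nowhere-vanishing derivative. -/
structure ClosedC11 (n : ℕ) (L : ℝ) extends ClosedC1 n L where
  lipd : ∃ C : NNReal, LipschitzWith C fd
  inj : InjOn f (Ico 0 L)

/-- The unit tangent field of `c` is `C`-Lipschitz with respect to the arclength of `c`. -/
def TangentLip {n : ℕ} {L : ℝ} (c : ClosedC1 n L) (C : ℝ) : Prop :=
  ∀ x y : ℝ, x ≤ y →
    ‖‖c.fd y‖⁻¹ • c.fd y - ‖c.fd x‖⁻¹ • c.fd x‖ ≤ C * ∫ t in x..y, ‖c.fd t‖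

/-- Pointwise geometric focal distance `F_g(γ(s))` of the curve `f` with domain `D`. -/
def FgPt {n : ℕ} (f fd : ℝ → Euc n) (D : Set ℝ) (s : ℝ) : ℝ :=
  sInf {r : ℝ | 0 < r ∧ f s ∈ closure (Odisk (f s) (fd s) r ∩ (f '' D))}

end


noncomputable section

/-- The defining set of the ball radius `RO`. -/
def ROset {n : ℕ} (f γd : ℝ → Euc n) (D : Set ℝ) : Set ℝ :=
  {r : ℝ | 0 < r ∧ ∃ s ∈ D, ∃ t ∈ D, ∃ w : Euc n,
    ‖w‖ = 1 ∧ ⟪w, γd s⟫ = 0 ∧ ‖f t - f s - r • w‖ < r}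

lemma RO_eq_sInf {n : ℕ} (f γd : ℝ → Euc n) (D : Set ℝ) :
    RO f γd D = sInf (ROset f γd D) := rfl

lemma ROset_bddBelow {n : ℕ} (f γd : ℝ → Euc n) (D : Set ℝ) :
    BddBelow (ROset f γd D) := ⟨0, fun x hx => hx.1.le⟩

lemma RO_nonneg {n : ℕ} (f γd : ℝ → Euc n) (D : Set ℝ) : 0 ≤ RO f γd D :=
  Real.sInf_nonneg (fun x hx => hx.1.le)

/-- Nonemptiness of the defining set for a closed `C¹` curve. -/
lemma ROset_nonempty {n : ℕ} {L : ℝ} (hL : 0 < L) (c : ClosedC1 n L) :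
    (ROset c.f c.fd Set.univ).Nonempty := by
  -- the curve is nonconstant
  have hnc : ∃ t₂ : ℝ, c.f t₂ ≠ c.f 0 := by
    by_contra h
    push_neg at h
    have h0 : HasDerivAt c.f (0 : Euc n) 0 :=
      (hasDerivAt_const (0:ℝ) (c.f 0)).congr_of_eventuallyEq
        (Filter.Eventually.of_forall fun t => h t)
    exact c.nz 0 ((c.deriv 0).unique h0)
  obtain ⟨t₂, ht₂⟩ := hnc
  set v : Euc n := c.f t₂ - c.f 0 with hv_def
  have hv : v ≠ 0 := sub_ne_zero.2 ht₂
  set φ : ℝ → ℝ := fun s => ⟪v, c.f s⟫ with hφ_def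
  have hφd : ∀ s : ℝ, HasDerivAt φ ⟪v, c.fd s⟫ s := by
    intro s
    have := (innerSL ℝ v).hasFDerivAt.comp_hasDerivAt s (c.deriv s)
    simp at this; exact this
  have hφc : ContinuousOn φ (Icc 0 L) :=
    fun s _ => ((hφd s).continuousAt).continuousWithinAt
  obtain ⟨s₀, hs₀mem, hmin⟩ := isCompact_Icc.exists_isMinOn
    (Set.nonempty_Icc.2 hL.le) hφc
  have hper : Function.Periodic φ L := fun x => by simp [hφ_def, c.per x]
  have hglob : ∀ y : ℝ, φ s₀ ≤ φ y := by
    intro y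
    obtain ⟨y', hy'mem, hy'⟩ := hper.exists_mem_Ico₀ hL y
    rw [hy']
    exact hmin (Ico_subset_Icc_self hy'mem)
  have hloc : IsLocalMin φ s₀ := Filter.Eventually.of_forall hglob
  have hd0 : ⟪v, c.fd s₀⟫ = 0 := hloc.hasDerivAt_eq_zero (hφd s₀)
  set w : Euc n := ‖v‖⁻¹ • v with hw_def
  have hvn : ‖v‖ ≠ 0 := norm_ne_zero_iff.2 hv
  have hw1 : ‖w‖ = 1 := by
    rw [hw_def, norm_smul, norm_inv, norm_norm, inv_mul_cancel₀ hvn]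
  have horth : ⟪w, c.fd s₀⟫ = 0 := by
    rw [hw_def, real_inner_smul_left, hd0, mul_zero]
  set d : Euc n := c.f t₂ - c.f s₀ with hd_def
  have hvd : ‖v‖^2 ≤ ⟪v, d⟫ := by
    have h1 : φ s₀ ≤ φ 0 := hglob 0
    have : ⟪v, d⟫ = φ t₂ - φ s₀ := by
      rw [hd_def, inner_sub_right]
    rw [this]
    have h2 : ⟪v, v⟫ = φ t₂ - φ 0 := by
      rw [hv_def]; rw [inner_sub_right]
    have h3 : ⟪v, v⟫ = ‖v‖^2 := real_inner_self_eq_norm_sq v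
    linarith [h3 ▸ h2]
  have hvpos : (0:ℝ) < ‖v‖^2 := by positivity
  set a : ℝ := ⟪d, w⟫ with ha_def
  have ha : 0 < a := by
    have : a = ‖v‖⁻¹ * ⟪v, d⟫ := by
      rw [ha_def, real_inner_comm, hw_def, real_inner_smul_left]
    rw [this]
    have : (0:ℝ) < ⟪v, d⟫ := lt_of_lt_of_le hvpos hvd
    positivity
  set r' : ℝ := ‖d‖^2 / (2*a) + 1 with hr'_def
  have hr'pos : 0 < r' := by positivity
  refine ⟨r', hr'pos, s₀, mem_univ _, t₂, mem_univ _, w, hw1, horth, ?_⟩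
  have hsq : ‖d - r' • w‖^2 < r'^2 := by
    have h1 : ‖d - r' • w‖^2 = ‖d‖^2 - 2 * (r' * a) + r'^2 := by
      rw [norm_sub_sq_real, real_inner_smul_right, norm_smul, Real.norm_eq_abs,
        abs_of_pos hr'pos, mul_pow, hw1, one_pow, mul_one]
    rw [h1]
    have h2 : ‖d‖^2 < 2 * (r' * a) := by
      have : 2 * (r' * a) = ‖d‖^2 + 2*a := by
        rw [hr'_def]; field_simp
      rw [this]; linarith
    linarith
  calc ‖d - r' • w‖ < r' := by
        refine lt_of_pow_lt_pow_left₀ 2 hr'pos.le hsq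

/-- Key perturbation lemma: any element of the defining set for the limit curve
eventually bounds `RO` of the approximating curves. -/
lemma eventually_RO_le {n : ℕ} {L : ℝ} (γ : ℕ → ClosedC1 n L) (γ₀ : ClosedC1 n L)
    (hconv : TendstoUniformly (fun m => (γ m).f) γ₀.f atTop)
    (hconvd : TendstoUniformly (fun m => (γ m).fd) γ₀.fd atTop)
    {r' : ℝ} (hr' : r' ∈ ROset γ₀.f γ₀.fd Set.univ) :
    ∀ᶠ m in atTop, RO (γ m).f (γ m).fd Set.univ ≤ r' := by
  obtain ⟨hr'pos, s, -, t, -, w, hw1, horth, hlt⟩ := hr'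
  set v₀ : Euc n := γ₀.fd s with hv₀_def
  have hv₀ : v₀ ≠ 0 := γ₀.nz s
  have hv₀n : ‖v₀‖ ≠ 0 := norm_ne_zero_iff.2 hv₀
  set V : ℕ → Euc n := fun m => (γ m).fd s with hV_def
  have h1 : Filter.Tendsto V atTop (𝓝 v₀) := hconvd.tendsto_at s
  -- the projection of w orthogonal to V m
  set P : Euc n → Euc n := fun u => w - (⟪w, u⟫ / ‖u‖^2) • u with hP_def
  have hinner : Filter.Tendsto (fun m => ⟪w, V m⟫) atTop (𝓝 (0:ℝ)) := by
    have := Filter.Tendsto.inner (𝕜 := ℝ) (tendsto_const_nhds (x := w) (f := atTop)) h1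
    rwa [horth] at this
  have hnorm2 : Filter.Tendsto (fun m => ‖V m‖^2) atTop (𝓝 (‖v₀‖^2)) :=
    (h1.norm).pow 2
  have hdiv : Filter.Tendsto (fun m => ⟪w, V m⟫ / ‖V m‖^2) atTop (𝓝 0) := by
    have := hinner.div hnorm2 (by positivity)
    rwa [zero_div] at this
  have hp : Filter.Tendsto (fun m => P (V m)) atTop (𝓝 w) := by
    have := (tendsto_const_nhds (x := w) (f := atTop)).sub (hdiv.smul h1)
    simpa using this
  have hpnorm : Filter.Tendsto (fun m => ‖P (V m)‖) atTop (𝓝 1) := by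
    have := hp.norm; rwa [hw1] at this
  set W : ℕ → Euc n := fun m => ‖P (V m)‖⁻¹ • P (V m) with hW_def
  have hq : Filter.Tendsto W atTop (𝓝 w) := by
    have := (hpnorm.inv₀ one_ne_zero).smul hp
    simpa using this
  have hF : Filter.Tendsto
      (fun m => ‖(γ m).f t - (γ m).f s - r' • W m‖) atTop
      (𝓝 ‖γ₀.f t - γ₀.f s - r' • w‖) := by
    exact (((hconv.tendsto_at t).sub (hconv.tendsto_at s)).sub
      ((tendsto_const_nhds (x := r')).smul hq)).norm
  have E1 : ∀ᶠ m in atTop, ‖(γ m).f t - (γ m).f s - r' • W m‖ < r' :=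
    hF.eventually_lt_const hlt
  have E2 : ∀ᶠ m in atTop, ‖V m‖ ≠ 0 := by
    have h : (0:ℝ) < ‖v₀‖ := norm_pos_iff.2 hv₀
    filter_upwards [h1.norm.eventually_const_lt (half_lt_self h)] with m hm
    exact ne_of_gt (lt_trans (by positivity) hm)
  have E3 : ∀ᶠ m in atTop, ‖P (V m)‖ ≠ 0 := by
    filter_upwards [hpnorm.eventually_const_lt (by norm_num : (1:ℝ)/2 < 1)] with m hm
    exact ne_of_gt (lt_trans (by norm_num) hm)
  filter_upwards [E1, E2, E3] with m hm1 hm2 hm3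
  have hWu : ‖W m‖ = 1 := by
    rw [hW_def]; simp only
    rw [norm_smul, norm_inv, norm_norm, inv_mul_cancel₀ hm3]
  have hWorth : ⟪W m, V m⟫ = 0 := by
    rw [hW_def]; simp only
    rw [real_inner_smul_left, hP_def]; simp only
    rw [inner_sub_left, real_inner_smul_left, real_inner_self_eq_norm_sq]
    field_simp
    simp
  have hmem : r' ∈ ROset (γ m).f (γ m).fd Set.univ :=
    ⟨hr'pos, s, mem_univ _, t, mem_univ _, W m, hWu, hWorth, hm1⟩
  exact csInf_le (ROset_bddBelow _ _ _) hmem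

end

/-- The ball radius is upper semicontinuous under `C¹` convergence of
closed curves: if `R_O(K_m) ≥ r` for all sufficiently large `m`, then `R_O(K₀) ≥ r`;
consequently `limsup_m R_O(K_m) ≤ R_O(K₀)`. -/
theorem statement_14 {n : ℕ} (hn : 2 ≤ n) (L : ℝ) (hL : 0 < L)
    (γ : ℕ → ClosedC1 n L) (γ₀ : ClosedC1 n L)
    (hconv : TendstoUniformly (fun m => (γ m).f) γ₀.f atTop)
    (hconvd : TendstoUniformly (fun m => (γ m).fd) γ₀.fd atTop) :
    (∀ r : ℝ, 0 < r → (∀ᶠ m in atTop, r ≤ RO (γ m).f (γ m).fd Set.univ) →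
      r ≤ RO γ₀.f γ₀.fd Set.univ) ∧
    atTop.limsup (fun m => RO (γ m).f (γ m).fd Set.univ) ≤ RO γ₀.f γ₀.fd Set.univ := by
  have hne := ROset_nonempty hL γ₀
  have key : ∀ r' ∈ ROset γ₀.f γ₀.fd Set.univ,
      ∀ᶠ m in atTop, RO (γ m).f (γ m).fd Set.univ ≤ r' :=
    fun r' hr' => eventually_RO_le γ γ₀ hconv hconvd hr'
  constructor
  · intro r hr hev
    by_contra hlt
    push_neg at hlt
    rw [RO_eq_sInf] at hlt
    obtain ⟨r', hr'mem, hr'lt⟩ := exists_lt_of_csInf_lt hne hlt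
    obtain ⟨m, h1, h2⟩ := (hev.and (key r' hr'mem)).exists
    linarith
  · have hco : Filter.IsCoboundedUnder (· ≤ ·) atTop
        (fun m => RO (γ m).f (γ m).fd Set.univ) :=
      Filter.isCoboundedUnder_le_of_le atTop (fun m => RO_nonneg _ _ _)
    rw [RO_eq_sInf]
    exact le_csInf hne (fun r' hr' => Filter.limsup_le_of_le hco (key r' hr'))
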